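/- Truncation via mask: for any z, r ∈ ℤ, if z - r is truncated by d bits (integer division by 2^d, denoted t(·)) and r^t = t(r), then 2^d·(t(z - r) + r^t) differs from z by at most 2^{d+1} - 2; in particular t(z - r) + r^t ∈ {t(z) - 1, t(z), t(z) + 1} when t denotes floor division by 2^d over the integers. -/

import Mathlib

theorem truncation_via_mask (d : ℕ) (z r : ℤ) :
    |2^d * (Int.fdiv (z - r) (2^d) + Int.fdiv r (2^d)) - z| ≤ 2^(d+1) - 2 ∧
    (Int.fdiv (z - r) (2^d) + Int.fdiv r (2^d)) ∈
      ({Int.fdiv z (2^d) - 1, Int.fdiv z (2^d), Int.fdiv z (2^d) + 1} : Set ℤ) := by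
  set q : ℤ := 2^d with hqdef
  have hq : 0 < q := by positivity
  have h1 := Int.mul_fdiv_add_fmod (z - r) q
  have h2 := Int.mul_fdiv_add_fmod r q
  have h3 := Int.mul_fdiv_add_fmod z q
  have n1 : 0 ≤ (z - r).fmod q := Int.fmod_nonneg_of_pos _ hq
  have n2 : 0 ≤ r.fmod q := Int.fmod_nonneg_of_pos _ hq
  have n3 : 0 ≤ z.fmod q := Int.fmod_nonneg_of_pos _ hq
  have l1 : (z - r).fmod q < q := Int.fmod_lt_of_pos _ hq
  have l2 : r.fmod q < q := Int.fmod_lt_of_pos _ hq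
  have l3 : z.fmod q < q := Int.fmod_lt_of_pos _ hq
  set a := (z - r).fdiv q
  set b := r.fdiv q
  set c := z.fdiv q
  have key : q * (c - (a + b)) = (z - r).fmod q + r.fmod q - z.fmod q := by ring_nf; linarith
  have hk0 : 0 ≤ c - (a + b) := by
    by_contra h
    push_neg at h
    have : c - (a + b) ≤ -1 := by omega
    have : q * (c - (a + b)) ≤ q * (-1) := by
      exact mul_le_mul_of_nonneg_left this hq.le
    omega
  have hk1 : c - (a + b) ≤ 1 := by
    by_contra h
    push_neg at h
    have : 2 ≤ c - (a + b) := by omega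
    have : q * 2 ≤ q * (c - (a + b)) := by
      exact mul_le_mul_of_nonneg_left this hq.le
    omega
  constructor
  · have habs : q * (a + b) - z = -((z - r).fmod q + r.fmod q) := by ring_nf; linarith
    rw [habs, abs_neg, abs_of_nonneg (by linarith)]
    have : (2:ℤ)^(d+1) = 2 * q := by rw [hqdef]; ring
    linarith
  · interval_cases h : c - (a + b)
    · right; left; omega
    · left; omega
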